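/- Let D be a finite distributive lattice and E a finite distributive lattice that is not isomorphic to the congruence lattice of any slim planar semimodular lattice. Then: if D is isomorphic to the congruence lattice of some slim planar semimodular lattice, no (principal lattice) filter of D is isomorphic to E. Equivalently, if some filter of D is isomorphic to E, then D is not isomorphic to the congruence lattice of any slim planar semimodular lattice. -/

import Mathlib

/-- A (lattice) congruence of `L`: an equivalence relation compatible with `⊔` and `⊓`. -/
def LatCon (L : Type) [Lattice L] : Type :=
  {s : Setoid L // ∀ a b c d : L, s a b → s c d → s (a ⊔ c) (b ⊔ d) ∧ s (a ⊓ c) (b ⊓ d)}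

/-- The congruence lattice order: inclusion of congruences. -/
instance (L : Type) [Lattice L] : PartialOrder (LatCon L) where
  le α β := ∀ x y : L, α.1 x y → β.1 x y
  le_refl _ _ _ h := h
  le_trans _ _ _ h1 h2 x y h := h2 x y (h1 x y h)
  le_antisymm α β h1 h2 :=
    Subtype.ext (Setoid.ext fun x y => ⟨h1 x y, h2 x y⟩)

/-- A lattice is (upper) semimodular: `a ⋖ b` and `a ≤ c` imply `a ⊔ c ⪯ b ⊔ c`. -/
def IsSemimodular (L : Type) [Lattice L] : Prop :=
  ∀ a b c : L, a ⋖ b → a ≤ c → (a ⊔ c = b ⊔ c ∨ (a ⊔ c) ⋖ (b ⊔ c))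

/-- A lattice is slim if its nonzero join-irreducibles form the union of two chains. -/
def IsSlim (L : Type) [Lattice L] : Prop :=
  ∃ C C' : Set L, IsChain (· ≤ ·) C ∧ IsChain (· ≤ ·) C' ∧
    {a : L | SupIrred a} ⊆ C ∪ C'

/-- A slim planar semimodular (SPS) lattice: a finite semimodular lattice whose poset of
nonzero join-irreducibles is a union of two chains (slimness implies planarity). -/
def IsSPS (L : Type) [Lattice L] : Prop := IsSemimodular L ∧ IsSlim L

/-- `D` is order-isomorphic to the congruence lattice of `L`. -/
def ConIso (D L : Type) [Lattice D] [Lattice L] : Prop :=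
  Nonempty (D ≃o LatCon L)

/-- `D` is CSPS-representable: isomorphic to the congruence lattice of some slim planar
semimodular lattice. -/
def IsCSPS (D : Type) [Lattice D] : Prop :=
  ∃ (L : Type) (iL : Lattice L) (_ : Fintype L), @IsSPS L iL ∧ @ConIso D L _ iL

namespace CSPSAux

variable {L : Type} [Lattice L]

def Qc (θ : LatCon L) : Type := Quotient θ.1

variable (θ : LatCon L)

def qmk (x : L) : Qc θ := Quotient.mk θ.1 x

lemma qmk_surjective : Function.Surjective (qmk θ) :=
  fun X => Quotient.inductionOn X fun x => ⟨x, rfl⟩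

instance : Max (Qc θ) :=
  ⟨Quotient.lift₂ (fun a b => qmk θ (a ⊔ b))
    (fun a b a' b' ha hb => Quotient.sound ((θ.2 a a' b b' ha hb).1))⟩

instance : Min (Qc θ) :=
  ⟨Quotient.lift₂ (fun a b => qmk θ (a ⊓ b))
    (fun a b a' b' ha hb => Quotient.sound ((θ.2 a a' b b' ha hb).2))⟩

instance : Lattice (Qc θ) := Lattice.mk'
  (fun A B => by
    obtain ⟨a, rfl⟩ := qmk_surjective θ A; obtain ⟨b, rfl⟩ := qmk_surjective θ B
    show qmk θ (a ⊔ b) = qmk θ (b ⊔ a); rw [sup_comm])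
  (fun A B C => by
    obtain ⟨a, rfl⟩ := qmk_surjective θ A; obtain ⟨b, rfl⟩ := qmk_surjective θ B
    obtain ⟨c, rfl⟩ := qmk_surjective θ C
    show qmk θ (a ⊔ b ⊔ c) = qmk θ (a ⊔ (b ⊔ c)); rw [sup_assoc])
  (fun A B => by
    obtain ⟨a, rfl⟩ := qmk_surjective θ A; obtain ⟨b, rfl⟩ := qmk_surjective θ B
    show qmk θ (a ⊓ b) = qmk θ (b ⊓ a); rw [inf_comm])
  (fun A B C => by
    obtain ⟨a, rfl⟩ := qmk_surjective θ A; obtain ⟨b, rfl⟩ := qmk_surjective θ B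
    obtain ⟨c, rfl⟩ := qmk_surjective θ C
    show qmk θ (a ⊓ b ⊓ c) = qmk θ (a ⊓ (b ⊓ c)); rw [inf_assoc])
  (fun A B => by
    obtain ⟨a, rfl⟩ := qmk_surjective θ A; obtain ⟨b, rfl⟩ := qmk_surjective θ B
    show qmk θ (a ⊔ a ⊓ b) = qmk θ a; rw [sup_inf_self])
  (fun A B => by
    obtain ⟨a, rfl⟩ := qmk_surjective θ A; obtain ⟨b, rfl⟩ := qmk_surjective θ B
    show qmk θ (a ⊓ (a ⊔ b)) = qmk θ a; rw [inf_sup_self])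

lemma qmk_sup (a b : L) : qmk θ a ⊔ qmk θ b = qmk θ (a ⊔ b) := rfl
lemma qmk_inf (a b : L) : qmk θ a ⊓ qmk θ b = qmk θ (a ⊓ b) := rfl

lemma qmk_eq_iff {a b : L} : qmk θ a = qmk θ b ↔ θ.1 a b :=
  ⟨Quotient.exact, Quotient.sound⟩

lemma qmk_mono {a b : L} (h : a ≤ b) : qmk θ a ≤ qmk θ b := by
  rw [← sup_eq_right]; exact (qmk_sup θ a b).trans (congrArg _ (sup_eq_right.2 h))

end CSPSAux

namespace CSPSAux
variable {L : Type} [Lattice L] (θ : LatCon L) [Fintype L]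

open Classical in
noncomputable def mrep (x : L) : L :=
  (Finset.univ.filter (fun y => θ.1 x y)).sup' ⟨x, by simp⟩ id

open Classical in
lemma mrep_equiv (x : L) : θ.1 x (mrep θ x) := by
  refine Finset.sup'_induction _ _ (fun a ha b hb => ?_) (fun b hb => ?_)
  · have := (θ.2 x a x b ha hb).1
    rwa [sup_idem] at this
  · exact (Finset.mem_filter.1 hb).2

open Classical in
lemma le_mrep_of_equiv {x y : L} (h : θ.1 x y) : y ≤ mrep θ x := by
  have : y ∈ Finset.univ.filter (fun y => θ.1 x y) := by simp; exact h
  exact Finset.le_sup' (f := id) this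

lemma le_mrep (x : L) : x ≤ mrep θ x := le_mrep_of_equiv θ (θ.1.refl x)

lemma mrep_max {x y : L} (h : θ.1 (mrep θ x) y) : y ≤ mrep θ x :=
  le_mrep_of_equiv θ (θ.1.trans (mrep_equiv θ x) h)

lemma qmk_mrep (x : L) : qmk θ (mrep θ x) = qmk θ x :=
  (qmk_eq_iff θ).2 (θ.1.symm (mrep_equiv θ x))

noncomputable instance : Fintype (Qc θ) :=
  letI : DecidableEq (Qc θ) := Classical.decEq _
  Fintype.ofSurjective (qmk θ) (qmk_surjective θ)

/-- Key lemma: if `c` is the maximum of its block and `c ⋖ d` in `L`, with distinct images,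
then the images form a cover in the quotient. -/
lemma quot_covBy {c d : L} (hcd : c ⋖ d)
    (hne : qmk θ c ≠ qmk θ d) : qmk θ c ⋖ qmk θ d := by
  refine ⟨(qmk_mono θ hcd.le).lt_of_ne hne, ?_⟩
  intro Z h1 h2
  obtain ⟨z, rfl⟩ := qmk_surjective θ Z
  set M := mrep θ d with hM
  have hdM : θ.1 d M := mrep_equiv θ d
  have hqdM : qmk θ M = qmk θ d := qmk_mrep θ d
  set g : L := (c ⊔ z) ⊓ M with hg
  have hqg : qmk θ g = qmk θ z := by
    have h1' : qmk θ c ⊔ qmk θ z = qmk θ z := sup_eq_right.2 h1.le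
    have h2' : qmk θ z ⊓ qmk θ d = qmk θ z := inf_eq_left.2 h2.le
    calc qmk θ g = (qmk θ c ⊔ qmk θ z) ⊓ qmk θ M := rfl
      _ = qmk θ z ⊓ qmk θ d := by rw [h1', hqdM]
      _ = qmk θ z := h2'
  have hcle : c ≤ g := le_inf le_sup_left (hcd.le.trans (le_mrep θ d))
  have hcg : c < g := by
    refine hcle.lt_of_ne (fun h => h1.ne ?_)
    rw [h, hqg]
  have hgM : g ≤ M := inf_le_right
  -- d ⊓ g is c or d
  have hcdg : c ≤ d ⊓ g := le_inf hcd.le hcg.le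
  have hdg_cases : d ⊓ g = c ∨ d ⊓ g = d := by
    rcases eq_or_lt_of_le (inf_le_left : d ⊓ g ≤ d) with h | h
    · exact Or.inr h
    · rcases eq_or_lt_of_le hcdg with h' | h'
      · exact Or.inl h'.symm
      · exact absurd h (hcd.2 h')
  have hθg : θ.1 (d ⊓ g) g := by
    have := (θ.2 d M g g hdM (θ.1.refl g)).2
    rwa [inf_eq_right.2 hgM] at this
  rcases hdg_cases with h | h
  · rw [h] at hθg
    exact h1.ne (((qmk_eq_iff θ).2 hθg).trans hqg)
  · have hdle : d ≤ g := by rw [← h]; exact inf_le_right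
    exact h2.not_ge (hqg ▸ qmk_mono θ hdle)

lemma quot_semimodular (hsm : IsSemimodular L) : IsSemimodular (Qc θ) := by
  haveI : IsStronglyAtomic L := IsStronglyAtomic.of_wellFounded_lt
    (Finite.to_wellFoundedLT (α := L)).wf
  intro A B C hAB hAC
  rw [sup_eq_right.2 hAC]
  obtain ⟨a₀, hA⟩ := qmk_surjective θ A
  obtain ⟨b₀, hB⟩ := qmk_surjective θ B
  obtain ⟨c₀, hC⟩ := qmk_surjective θ C
  set a : L := mrep θ a₀ with ha
  have hqa : qmk θ a = A := (qmk_mrep θ a₀).trans hA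
  have hab0 : qmk θ (a ⊔ b₀) = B := by
    rw [← qmk_sup, hqa, hB]; exact sup_eq_right.2 hAB.le
  have hay : a < a ⊔ b₀ :=
    lt_of_le_of_ne le_sup_left (fun h => hAB.ne (by rw [← hqa, h, hab0]))
  obtain ⟨b, hcov, hble⟩ := exists_covBy_le_of_lt hay
  have hqbB : qmk θ b = B := by
    have h1 : A ≤ qmk θ b := hqa ▸ qmk_mono θ hcov.le
    have h2 : qmk θ b ≤ B := hab0 ▸ qmk_mono θ hble
    have hne : A ≠ qmk θ b := by
      intro h
      have hth : θ.1 a b := (qmk_eq_iff θ).1 (hqa.trans h)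
      exact hcov.lt.not_ge (mrep_max θ hth)
    exact (h2.lt_or_eq.resolve_left (hAB.2 (lt_of_le_of_ne h1 hne)))
  set c : L := mrep θ (a ⊔ c₀) with hc
  have hqc : qmk θ c = C := by
    rw [hc, qmk_mrep, ← qmk_sup, hqa, hC]; exact sup_eq_right.2 hAC
  have hac : a ≤ c := le_sup_left.trans (le_mrep θ _)
  have hBC : B ⊔ C = qmk θ (b ⊔ c) := by rw [← qmk_sup, hqbB, hqc]
  rcases hsm a b c hcov hac with h | h
  · left
    rw [sup_eq_right.2 hac] at h
    erw [hBC, ← hqc]; exact congrArg _ h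
  · rw [sup_eq_right.2 hac] at h
    by_cases he : qmk θ c = qmk θ (b ⊔ c)
    · left; erw [hBC, ← hqc, he]
    · right
      erw [hBC, ← hqc]
      exact quot_covBy θ h he

lemma quot_supIrred_rep : ∀ x : L, SupIrred (qmk θ x) → ∃ s, SupIrred s ∧ qmk θ s = qmk θ x := by
  have hwf : WellFounded ((· < ·) : L → L → Prop) := (Finite.to_wellFoundedLT (α := L)).wf
  intro x
  induction x using WellFounded.induction hwf with
  | _ x IH =>
    intro hx
    by_cases hxirr : SupIrred x
    · exact ⟨x, hxirr, rfl⟩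
    rw [SupIrred] at hxirr
    push_neg at hxirr
    by_cases hmin : IsMin x
    · exfalso
      apply hx.1
      intro Y _
      obtain ⟨y, rfl⟩ := qmk_surjective θ Y
      exact qmk_mono θ ((hmin (inf_le_left : x ⊓ y ≤ x)).trans inf_le_right)
    · obtain ⟨b, c, hbc, hb, hc⟩ := hxirr hmin
      have hbx : b < x := lt_of_le_of_ne (hbc ▸ le_sup_left) hb
      have hcx : c < x := lt_of_le_of_ne (hbc ▸ le_sup_right) hc
      have hsup : qmk θ b ⊔ qmk θ c = qmk θ x := by rw [qmk_sup, hbc]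
      rcases hx.2 hsup with h | h
      · obtain ⟨s, hs1, hs2⟩ := IH b hbx (h ▸ hx)
        exact ⟨s, hs1, hs2.trans h⟩
      · obtain ⟨s, hs1, hs2⟩ := IH c hcx (h ▸ hx)
        exact ⟨s, hs1, hs2.trans h⟩

lemma quot_slim (hs : IsSlim L) : IsSlim (Qc θ) := by
  obtain ⟨C, C', hC, hC', hsub⟩ := hs
  refine ⟨qmk θ '' C, qmk θ '' C', hC.image_of_map_rel _ _ _ (fun _ _ h => qmk_mono θ h),
    hC'.image_of_map_rel _ _ _ (fun _ _ h => qmk_mono θ h), ?_⟩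
  rintro X hX
  obtain ⟨x, rfl⟩ := qmk_surjective θ X
  obtain ⟨s, hs1, hs2⟩ := quot_supIrred_rep θ x hX
  rcases hsub hs1 with h | h
  · exact Or.inl ⟨s, h, hs2⟩
  · exact Or.inr ⟨s, h, hs2⟩

section Corr
variable {L : Type} [Lattice L] (θ : LatCon L)

def conUp (ψ : LatCon L) (hψ : θ ≤ ψ) : LatCon (Qc θ) := by
  refine ⟨⟨Quotient.lift₂ (fun x y => ψ.1 x y) ?_, ?_, ?_, ?_⟩, ?_⟩
  · intro x y x' y' hx hy
    exact propext ⟨fun h => ψ.1.trans (ψ.1.symm (hψ _ _ hx)) (ψ.1.trans h (hψ _ _ hy)),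
      fun h => ψ.1.trans (hψ _ _ hx) (ψ.1.trans h (ψ.1.symm (hψ _ _ hy)))⟩
  · intro X
    obtain ⟨x, rfl⟩ := qmk_surjective θ X
    exact ψ.1.refl x
  · intro X Y h
    obtain ⟨x, rfl⟩ := qmk_surjective θ X
    obtain ⟨y, rfl⟩ := qmk_surjective θ Y
    exact ψ.1.symm h
  · intro X Y Z h1 h2
    obtain ⟨x, rfl⟩ := qmk_surjective θ X
    obtain ⟨y, rfl⟩ := qmk_surjective θ Y
    obtain ⟨z, rfl⟩ := qmk_surjective θ Z
    exact ψ.1.trans h1 h2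
  · intro A B C D h1 h2
    obtain ⟨a, rfl⟩ := qmk_surjective θ A
    obtain ⟨b, rfl⟩ := qmk_surjective θ B
    obtain ⟨c, rfl⟩ := qmk_surjective θ C
    obtain ⟨d, rfl⟩ := qmk_surjective θ D
    exact ψ.2 a b c d h1 h2

def conDown (ρ : LatCon (Qc θ)) : LatCon L :=
  ⟨⟨fun x y => ρ.1 (qmk θ x) (qmk θ y),
    fun x => ρ.1.refl _, fun h => ρ.1.symm h, fun h1 h2 => ρ.1.trans h1 h2⟩,
    fun a b c d h1 h2 => ρ.2 (qmk θ a) (qmk θ b) (qmk θ c) (qmk θ d) h1 h2⟩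

lemma conDown_mem (ρ : LatCon (Qc θ)) : θ ≤ conDown θ ρ := by
  intro x y h
  show ρ.1 (qmk θ x) (qmk θ y)
  rw [(qmk_eq_iff θ).2 h]

def filterIso : (Set.Ici θ) ≃o LatCon (Qc θ) where
  toFun ψ := conUp θ ψ.1 ψ.2
  invFun ρ := ⟨conDown θ ρ, conDown_mem θ ρ⟩
  left_inv ψ := Subtype.ext (Subtype.ext (Setoid.ext fun x y => Iff.rfl))
  right_inv ρ := Subtype.ext (Setoid.ext fun X Y => by
    obtain ⟨x, rfl⟩ := qmk_surjective θ X
    obtain ⟨y, rfl⟩ := qmk_surjective θ Y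
    exact Iff.rfl)
  map_rel_iff' := by
    intro ψ ψ'
    constructor
    · intro h a b hab
      exact h (qmk θ a) (qmk θ b) hab
    · intro h X Y
      obtain ⟨x, rfl⟩ := qmk_surjective θ X
      obtain ⟨y, rfl⟩ := qmk_surjective θ Y
      exact h x y

end Corr

def iciIso {α β : Type} [Preorder α] [Preorder β] (g : α ≃o β) (u : α) :
    (Set.Ici u) ≃o (Set.Ici (g u)) where
  toFun x := ⟨g x.1, g.le_iff_le.2 x.2⟩
  invFun y := ⟨g.symm y.1, by
    have := g.symm.monotone y.2
    rwa [g.symm_apply_apply] at this⟩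
  left_inv x := Subtype.ext (g.symm_apply_apply x.1)
  right_inv y := Subtype.ext (g.apply_symm_apply y.1)
  map_rel_iff' := by
    intro x y
    simp only [Equiv.coe_fn_mk, Subtype.mk_le_mk]
    exact ⟨fun h => Subtype.coe_le_coe.1 (g.le_iff_le.1 h), fun h => g.le_iff_le.2 h⟩

end CSPSAux

/-- Let `E` be a finite distributive lattice that is not isomorphic to the congruence
lattice of any SPS lattice.  If the finite distributive lattice `D` is isomorphic to the
congruence lattice of some SPS lattice, then no principal filter of `D` is isomorphic to
`E`. -/
theorem no_filter_iso_of_not_CSPS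
    {D E : Type} [DistribLattice D] [Fintype D] [DistribLattice E] [Fintype E]
    (hE : ¬ IsCSPS E) (hD : IsCSPS D) :
    ∀ u : D, IsEmpty ((Set.Ici u) ≃o E) := by
  intro u
  constructor
  intro f
  obtain ⟨L, iL, iF, hSPS, hCon⟩ := hD
  obtain ⟨g⟩ := hCon
  apply hE
  refine ⟨CSPSAux.Qc (g u), inferInstance, inferInstance,
    ⟨CSPSAux.quot_semimodular (g u) hSPS.1, CSPSAux.quot_slim (g u) hSPS.2⟩, ⟨?_⟩⟩
  exact (f.symm.trans (CSPSAux.iciIso g u)).trans (CSPSAux.filterIso (g u))
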